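/- Consider a finite discounted MDP whose action set has m elements, and inverse temperature τ ≥ 0. Suppose Rmax ≥ −Rmin ≥ 0, Rmin ≤ R(s,a) ≤ Rmax for all (s,a), the initial Q-function satisfies Rmin ≤ Q_0(s,a) ≤ Rmax for all (s,a), and Q* : S → A → ℝ is a fixed point of the standard Bellman operator T. Let Qmax = Rmax/(1 − γ). Then for every (s,a), liminf_{k→∞} (T_soft^k Q_0)(s,a) ≥ Q*(s,a) − (γ·(m − 1)/(1 − γ)) · max{ 1/(τ + 2), 2·Qmax/(1 + exp(τ)) }. -/

import Mathlib

/-- The softmax-weighted value `g_x(τ) = (∑ a, exp(τ·x_a)·x_a) / (∑ a, exp(τ·x_a))`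
over a finite action type. -/
noncomputable def gval {A : Type*} [Fintype A] (x : A → ℝ) (τ : ℝ) : ℝ :=
  (∑ a, Real.exp (τ * x a) * x a) / (∑ a, Real.exp (τ * x a))

/-- The softmax Bellman operator
`(T_soft Q)(s,a) = R(s,a) + γ·∑ s', P(s'|s,a)·g_{Q(s',·)}(τ)`. -/
noncomputable def Tsoft {S A : Type*} [Fintype S] [Fintype A]
    (P : S → A → S → ℝ) (R : S → A → ℝ) (γ τ : ℝ) (Q : S → A → ℝ) :
    S → A → ℝ :=
  fun s a => R s a + γ * ∑ s', P s a s' * gval (Q s') τ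

/-- The standard Bellman operator
`(T Q)(s,a) = R(s,a) + γ·∑ s', P(s'|s,a)·max_{a'} Q(s',a')`. -/
noncomputable def Tstd {S A : Type*} [Fintype S] [Fintype A] [Nonempty A]
    (P : S → A → S → ℝ) (R : S → A → ℝ) (γ : ℝ) (Q : S → A → ℝ) :
    S → A → ℝ :=
  fun s a => R s a + γ * ∑ s', P s a s' * Finset.univ.sup' Finset.univ_nonempty (Q s')

open Finset Real Filter

lemma sumexp_pos {A : Type*} [Fintype A] [Nonempty A] (x : A → ℝ) (τ : ℝ) :
    0 < ∑ a, Real.exp (τ * x a) :=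
  Finset.sum_pos (fun a _ => Real.exp_pos _) Finset.univ_nonempty

lemma abs_gval_le' {A : Type*} [Fintype A] [Nonempty A] (x : A → ℝ) (τ C : ℝ)
    (hx : ∀ a, |x a| ≤ C) : |gval x τ| ≤ C := by
  have hZ := sumexp_pos x τ
  rw [gval, abs_div, abs_of_pos hZ, div_le_iff₀ hZ]
  calc |∑ a, Real.exp (τ * x a) * x a| ≤ ∑ a, |Real.exp (τ * x a) * x a| :=
        Finset.abs_sum_le_sum_abs _ _
    _ ≤ ∑ a, Real.exp (τ * x a) * C := by
        refine Finset.sum_le_sum fun a _ => ?_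
        rw [abs_mul, abs_of_pos (Real.exp_pos _)]
        exact mul_le_mul_of_nonneg_left (hx a) (Real.exp_pos _).le
    _ = C * ∑ a, Real.exp (τ * x a) := by rw [← Finset.sum_mul, mul_comm]

lemma abs_sup'_sub_sup'_le' {A : Type*} [Fintype A] [Nonempty A] (f g : A → ℝ) (C : ℝ)
    (h : ∀ a, |f a - g a| ≤ C) :
    |Finset.univ.sup' Finset.univ_nonempty f - Finset.univ.sup' Finset.univ_nonempty g| ≤ C := by
  rw [abs_le]
  constructor
  · obtain ⟨b, -, hb⟩ := Finset.exists_mem_eq_sup' Finset.univ_nonempty g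
    have h1 : f b ≤ Finset.univ.sup' Finset.univ_nonempty f := Finset.le_sup' f (mem_univ b)
    have h2 := abs_le.1 (h b)
    rw [hb]
    linarith [h2.1]
  · obtain ⟨b, -, hb⟩ := Finset.exists_mem_eq_sup' Finset.univ_nonempty f
    have h1 : g b ≤ Finset.univ.sup' Finset.univ_nonempty g := Finset.le_sup' g (mem_univ b)
    have h2 := abs_le.1 (h b)
    rw [hb]
    linarith [h2.2]

lemma gap_le' {A : Type*} [Fintype A] [Nonempty A] (x : A → ℝ) (τ C : ℝ)
    (hτ : 0 ≤ τ) (hC : 0 ≤ C) (hx : ∀ a, |x a| ≤ C) :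
    Finset.univ.sup' Finset.univ_nonempty x - gval x τ ≤
      ((Fintype.card A : ℝ) - 1) * max (1 / (τ + 2)) (2 * C / (1 + Real.exp τ)) := by
  classical
  set B := max (1 / (τ + 2)) (2 * C / (1 + Real.exp τ)) with hBdef
  have hBpos : 0 < B := lt_of_lt_of_le (by positivity) (le_max_left _ _)
  set Z := ∑ a, Real.exp (τ * x a) with hZdef
  have hZ : 0 < Z := sumexp_pos x τ
  obtain ⟨astar, -, hastar⟩ := Finset.exists_mem_eq_sup' (Finset.univ_nonempty (α := A)) x
  set M := Finset.univ.sup' Finset.univ_nonempty x with hMdef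
  have key : ∀ a : A, Real.exp (τ * x a) * (M - x a) ≤ B * Z := by
    intro a
    by_cases hxa : x a = M
    · rw [hxa]; simp; positivity
    · set d := M - x a with hd
      have hd0 : 0 ≤ d := sub_nonneg.2 (Finset.le_sup' x (mem_univ a))
      have hMC : M ≤ C := Finset.sup'_le _ _ fun b _ => le_of_abs_le (hx b)
      have hxaC : -C ≤ x a := neg_le_of_abs_le (hx a)
      have hdC : d ≤ 2 * C := by simp only [hd]; linarith
      have hexpM : Real.exp (τ * M) = Real.exp (τ * x a) * Real.exp (τ * d) := by
        rw [← Real.exp_add, hd]; ring_nf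
      have hstep : d ≤ B * (1 + Real.exp (τ * d)) := by
        rcases le_or_gt d 1 with h1 | h1
        · have he : τ * d + 1 ≤ Real.exp (τ * d) := Real.add_one_le_exp _
          have hB1 : 1 / (τ + 2) ≤ B := le_max_left _ _
          have key1 : d ≤ (1 / (τ + 2)) * (1 + Real.exp (τ * d)) := by
            rw [div_mul_eq_mul_div, le_div_iff₀ (by linarith), one_mul]
            nlinarith [mul_nonneg hτ hd0]
          calc d ≤ (1 / (τ + 2)) * (1 + Real.exp (τ * d)) := key1
            _ ≤ B * (1 + Real.exp (τ * d)) :=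
              mul_le_mul_of_nonneg_right hB1 (by positivity)
        · have hB2 : 2 * C / (1 + Real.exp τ) ≤ B := le_max_right _ _
          have he : Real.exp τ ≤ Real.exp (τ * d) := Real.exp_le_exp.2 (by nlinarith)
          have key2 : d ≤ (2 * C / (1 + Real.exp τ)) * (1 + Real.exp (τ * d)) := by
            rw [div_mul_eq_mul_div, le_div_iff₀ (by positivity)]
            nlinarith [Real.exp_pos τ]
          calc d ≤ (2 * C / (1 + Real.exp τ)) * (1 + Real.exp (τ * d)) := key2
            _ ≤ B * (1 + Real.exp (τ * d)) :=
              mul_le_mul_of_nonneg_right hB2 (by positivity)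
      have h1 : Real.exp (τ * x a) * d ≤ B * (Real.exp (τ * x a) + Real.exp (τ * M)) := by
        rw [hexpM]
        nlinarith [Real.exp_pos (τ * x a)]
      have hne : a ≠ astar := fun h => hxa (h ▸ hastar.symm ▸ rfl)
      have h2 : Real.exp (τ * x a) + Real.exp (τ * M) ≤ Z := by
        have : ∑ b ∈ ({a, astar} : Finset A), Real.exp (τ * x b) ≤ Z :=
          Finset.sum_le_sum_of_subset_of_nonneg (Finset.subset_univ _)
            (fun b _ _ => (Real.exp_pos _).le)
        rwa [Finset.sum_pair hne, ← hastar] at this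
      calc Real.exp (τ * x a) * (M - x a) ≤ B * (Real.exp (τ * x a) + Real.exp (τ * M)) := h1
        _ ≤ B * Z := mul_le_mul_of_nonneg_left h2 hBpos.le
  have hgval : M - gval x τ = (∑ a, Real.exp (τ * x a) * (M - x a)) / Z := by
    have hsum : ∑ a, Real.exp (τ * x a) * (M - x a)
        = M * Z - ∑ a, Real.exp (τ * x a) * x a := by
      simp only [mul_sub]
      rw [Finset.sum_sub_distrib, ← Finset.sum_mul, mul_comm]
    rw [hsum, gval, ← hZdef]
    field_simp
  rw [hgval, div_le_iff₀ hZ]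
  have hsplit : ∑ a, Real.exp (τ * x a) * (M - x a)
      = ∑ a ∈ Finset.univ.erase astar, Real.exp (τ * x a) * (M - x a) := by
    rw [← Finset.add_sum_erase _ _ (mem_univ astar), ← hastar]
    simp
  rw [hsplit]
  have hcard : (Finset.univ.erase astar).card = Fintype.card A - 1 := by
    rw [Finset.card_erase_of_mem (mem_univ astar), Finset.card_univ]
  have hsum_le : ∑ a ∈ Finset.univ.erase astar, Real.exp (τ * x a) * (M - x a)
      ≤ ((Fintype.card A : ℝ) - 1) * (B * Z) := by
    calc ∑ a ∈ Finset.univ.erase astar, Real.exp (τ * x a) * (M - x a)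
        ≤ ∑ _a ∈ Finset.univ.erase astar, B * Z :=
          Finset.sum_le_sum fun b _ => key b
      _ = ((Fintype.card A - 1 : ℕ) : ℝ) * (B * Z) := by
          rw [Finset.sum_const, hcard, nsmul_eq_mul]
      _ = ((Fintype.card A : ℝ) - 1) * (B * Z) := by
          rw [Nat.cast_sub Fintype.card_pos, Nat.cast_one]
  calc ∑ a ∈ Finset.univ.erase astar, Real.exp (τ * x a) * (M - x a)
      ≤ ((Fintype.card A : ℝ) - 1) * (B * Z) := hsum_le
    _ = ((Fintype.card A : ℝ) - 1) * B * Z := by ring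

/-- Lower bound (Theorem 1, part (I)): with `m` actions, rewards and initial
Q-values in `[Rmin, Rmax]` with `Rmax ≥ −Rmin ≥ 0`, and `Q*` a fixed point of the
standard Bellman operator,
`liminf_{k→∞} (T_soft^k Q_0)(s,a) ≥
  Q*(s,a) − (γ(m−1)/(1−γ))·max{1/(τ+2), 2·Qmax/(1+exp τ)}`
where `Qmax = Rmax/(1−γ)`. -/
theorem liminf_tsoft_iterate_ge_fixedPoint_sub
    {S A : Type*} [Fintype S] [Fintype A] [Nonempty S] [Nonempty A]
    (P : S → A → S → ℝ) (R : S → A → ℝ) (γ τ Rmin Rmax : ℝ)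
    (hγ : γ ∈ Set.Ioo (0 : ℝ) 1) (hτ : 0 ≤ τ)
    (hRm : 0 ≤ -Rmin) (hRM : -Rmin ≤ Rmax)
    (hP : ∀ s a s', 0 ≤ P s a s') (hP1 : ∀ s a, ∑ s', P s a s' = 1)
    (hR : ∀ s a, Rmin ≤ R s a ∧ R s a ≤ Rmax)
    (Q0 : S → A → ℝ) (hQ0 : ∀ s a, Rmin ≤ Q0 s a ∧ Q0 s a ≤ Rmax)
    (Qstar : S → A → ℝ) (hQstar : Tstd P R γ Qstar = Qstar)
    (s : S) (a : A) :
    Filter.liminf (fun k : ℕ => ((Tsoft P R γ τ)^[k] Q0) s a) Filter.atTop ≥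
      Qstar s a -
        γ * ((Fintype.card A : ℝ) - 1) / (1 - γ) *
          max (1 / (τ + 2)) (2 * (Rmax / (1 - γ)) / (1 + Real.exp τ)) := by
  obtain ⟨hγ0, hγ1⟩ := hγ
  have h1γ : 0 < 1 - γ := by linarith
  have hRmax0 : 0 ≤ Rmax := le_trans hRm hRM
  set Qmax := Rmax / (1 - γ) with hQmdef
  have hQmax0 : 0 ≤ Qmax := by positivity
  have hRQ : Rmax ≤ Qmax := by
    rw [hQmdef, le_div_iff₀ h1γ]; nlinarith
  have hfix : Rmax + γ * Qmax = Qmax := by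
    rw [hQmdef]; field_simp; ring
  set m := (Fintype.card A : ℝ) with hmdef
  have hm1 : 1 ≤ m := by
    rw [hmdef]; exact_mod_cast Fintype.card_pos
  set B := max (1 / (τ + 2)) (2 * Qmax / (1 + Real.exp τ)) with hBdef
  have hB0 : 0 ≤ B := le_trans (by positivity) (le_max_left _ _)
  set D := γ * (m - 1) / (1 - γ) * B with hDdef
  have hD0 : 0 ≤ D := by
    apply mul_nonneg _ hB0
    apply div_nonneg _ h1γ.le
    nlinarith
  have hDfix : γ * D + γ * ((m - 1) * B) = D := by
    rw [hDdef]; field_simp; ring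
  have habsR : ∀ s a, |R s a| ≤ Rmax := fun s a =>
    abs_le.2 ⟨by linarith [(hR s a).1], (hR s a).2⟩
  -- Claim 1: iterates bounded by Qmax
  have hbdd : ∀ k s a, |((Tsoft P R γ τ)^[k] Q0) s a| ≤ Qmax := by
    intro k
    induction k with
    | zero =>
      intro s a
      simp only [Function.iterate_zero, id]
      exact le_trans (abs_le.2 ⟨by linarith [(hQ0 s a).1], (hQ0 s a).2⟩) hRQ
    | succ k ih =>
      intro s a
      rw [Function.iterate_succ_apply']
      set Qk := (Tsoft P R γ τ)^[k] Q0
      have hsum : |∑ s', P s a s' * gval (Qk s') τ| ≤ Qmax := by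
        calc |∑ s', P s a s' * gval (Qk s') τ|
            ≤ ∑ s', |P s a s' * gval (Qk s') τ| := Finset.abs_sum_le_sum_abs _ _
          _ ≤ ∑ s', P s a s' * Qmax := by
              refine Finset.sum_le_sum fun s' _ => ?_
              rw [abs_mul, abs_of_nonneg (hP s a s')]
              exact mul_le_mul_of_nonneg_left (abs_gval_le' _ _ _ (ih s')) (hP s a s')
          _ = Qmax := by rw [← Finset.sum_mul, hP1, one_mul]
      calc |Tsoft P R γ τ Qk s a|
          ≤ |R s a| + |γ * ∑ s', P s a s' * gval (Qk s') τ| := abs_add_le _ _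
        _ ≤ Rmax + γ * Qmax := by
            rw [abs_mul, abs_of_pos hγ0]
            exact add_le_add (habsR s a) (mul_le_mul_of_nonneg_left hsum hγ0.le)
        _ = Qmax := hfix
  -- Claim 2: soft iterates dominate standard iterates minus D
  have hlow : ∀ k s a, ((Tstd P R γ)^[k] Q0) s a - D ≤ ((Tsoft P R γ τ)^[k] Q0) s a := by
    intro k
    induction k with
    | zero => intro s a; simp only [Function.iterate_zero, id]; linarith
    | succ k ih =>
      intro s a
      rw [Function.iterate_succ_apply', Function.iterate_succ_apply']
      set Qk := (Tsoft P R γ τ)^[k] Q0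
      set Tk := (Tstd P R γ)^[k] Q0
      have hpoint : ∀ s' : S,
          Finset.univ.sup' Finset.univ_nonempty (Tk s') - (D + (m - 1) * B)
            ≤ gval (Qk s') τ := by
        intro s'
        have hgap := gap_le' (Qk s') τ Qmax hτ hQmax0 (hbdd k s')
        obtain ⟨b, -, hb⟩ := Finset.exists_mem_eq_sup' (Finset.univ_nonempty (α := A)) (Tk s')
        have h1 : Tk s' b - D ≤ Qk s' b := ih s' b
        have h2 : Qk s' b ≤ Finset.univ.sup' Finset.univ_nonempty (Qk s') :=
          Finset.le_sup' _ (mem_univ b)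
        rw [hb]
        rw [← hmdef] at hgap
        linarith
      have hsum : ∑ s', P s a s' * (Finset.univ.sup' Finset.univ_nonempty (Tk s')) -
            (D + (m - 1) * B) ≤ ∑ s', P s a s' * gval (Qk s') τ := by
        have : ∑ s', P s a s' *
              (Finset.univ.sup' Finset.univ_nonempty (Tk s') - (D + (m - 1) * B))
            ≤ ∑ s', P s a s' * gval (Qk s') τ :=
          Finset.sum_le_sum fun s' _ =>
            mul_le_mul_of_nonneg_left (hpoint s') (hP s a s')
        calc ∑ s', P s a s' * (Finset.univ.sup' Finset.univ_nonempty (Tk s')) -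
              (D + (m - 1) * B)
            = ∑ s', P s a s' *
                (Finset.univ.sup' Finset.univ_nonempty (Tk s') - (D + (m - 1) * B)) := by
              simp only [mul_sub]
              rw [Finset.sum_sub_distrib, ← Finset.sum_mul, hP1, one_mul]
          _ ≤ _ := this
      simp only [Tstd, Tsoft]
      have := mul_le_mul_of_nonneg_left hsum hγ0.le
      rw [mul_sub] at this
      linarith
  -- Claim 3: standard iterates converge to Qstar
  set C0 := (Finset.univ : Finset (S × A)).sup' Finset.univ_nonempty
      (fun p => |Q0 p.1 p.2 - Qstar p.1 p.2|) with hC0def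
  have hC0 : ∀ s a, |Q0 s a - Qstar s a| ≤ C0 := fun s a =>
    Finset.le_sup' (fun p : S × A => |Q0 p.1 p.2 - Qstar p.1 p.2|) (mem_univ ((s, a) : S × A))
  have hconv : ∀ k s a, |((Tstd P R γ)^[k] Q0) s a - Qstar s a| ≤ γ ^ k * C0 := by
    intro k
    induction k with
    | zero => intro s a; simpa using hC0 s a
    | succ k ih =>
      intro s a
      set Tk := (Tstd P R γ)^[k] Q0
      have expand : ((Tstd P R γ)^[k + 1] Q0) s a - Qstar s a =
          γ * ∑ s', P s a s' *
            (Finset.univ.sup' Finset.univ_nonempty (Tk s') -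
             Finset.univ.sup' Finset.univ_nonempty (Qstar s')) := by
        rw [Function.iterate_succ_apply']
        conv_lhs => rw [← hQstar]
        simp only [Tstd]
        rw [add_sub_add_left_eq_sub, ← mul_sub, ← Finset.sum_sub_distrib]
        congr 1
        exact Finset.sum_congr rfl fun s' _ => (mul_sub _ _ _).symm
      rw [expand, abs_mul, abs_of_pos hγ0]
      have hsum : |∑ s', P s a s' *
            (Finset.univ.sup' Finset.univ_nonempty (Tk s') -
             Finset.univ.sup' Finset.univ_nonempty (Qstar s'))| ≤ γ ^ k * C0 := by
        calc |∑ s', P s a s' * _| ≤ ∑ s', |P s a s' *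
              (Finset.univ.sup' Finset.univ_nonempty (Tk s') -
               Finset.univ.sup' Finset.univ_nonempty (Qstar s'))| :=
            Finset.abs_sum_le_sum_abs _ _
          _ ≤ ∑ s', P s a s' * (γ ^ k * C0) := by
              refine Finset.sum_le_sum fun s' _ => ?_
              rw [abs_mul, abs_of_nonneg (hP s a s')]
              exact mul_le_mul_of_nonneg_left
                (abs_sup'_sub_sup'_le' _ _ _ (fun b => ih s' b)) (hP s a s')
          _ = γ ^ k * C0 := by rw [← Finset.sum_mul, hP1, one_mul]
      calc γ * |∑ s', P s a s' * _| ≤ γ * (γ ^ k * C0) :=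
            mul_le_mul_of_nonneg_left hsum hγ0.le
        _ = γ ^ (k + 1) * C0 := by ring
  -- combine
  have hle : ∀ k : ℕ, Qstar s a - D - γ ^ k * C0 ≤ ((Tsoft P R γ τ)^[k] Q0) s a := by
    intro k
    have h1 := hlow k s a
    have h2 := (abs_le.1 (hconv k s a)).1
    linarith
  have htends : Filter.Tendsto (fun k : ℕ => Qstar s a - D - γ ^ k * C0) Filter.atTop
      (nhds (Qstar s a - D)) := by
    have hg : Filter.Tendsto (fun k : ℕ => γ ^ k * C0) Filter.atTop (nhds 0) := by
      simpa using (tendsto_pow_atTop_nhds_zero_of_lt_one hγ0.le hγ1).mul_const C0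
    simpa using (tendsto_const_nhds (x := Qstar s a - D) (f := Filter.atTop)).sub hg
  have hC0nn : 0 ≤ C0 := le_trans (abs_nonneg _) (hC0 s a)
  have hu : Filter.IsBoundedUnder (· ≥ ·) Filter.atTop
      (fun k : ℕ => Qstar s a - D - γ ^ k * C0) :=
    Filter.isBoundedUnder_of ⟨Qstar s a - D - C0, fun k => by
      have : γ ^ k * C0 ≤ C0 :=
        mul_le_of_le_one_left hC0nn (pow_le_one₀ hγ0.le hγ1.le)
      simp only [ge_iff_le]; linarith⟩
  have hv : Filter.IsCoboundedUnder (· ≥ ·) Filter.atTop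
      (fun k : ℕ => ((Tsoft P R γ τ)^[k] Q0) s a) :=
    Filter.isCoboundedUnder_ge_of_le Filter.atTop
      (x := Qmax) (fun k => le_of_abs_le (hbdd k s a))
  have hfin := Filter.liminf_le_liminf (Filter.Eventually.of_forall hle) hu hv
  rw [htends.liminf_eq] at hfin
  exact hfin
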